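/- Let N ≥ 1, let Q_1,…,Q_N ∈ ℂ, and let z_1,…,z_N : ℝ → ℂ be twice differentiable functions that are pairwise distinct at every time t. Suppose that for every i and every t, z_i'(t) = ∑_{j≠i} Q_j/(z_i(t) − z_j(t)). Then for every i and every t, z_i''(t) = −∑_{j≠i} Q_j·(Q_i + Q_j)/(z_i(t) − z_j(t))³. (The first-order charge dynamics is thus embedded in a second-order Hamiltonian flow with pairwise inverse-square interactions; the three-body terms arising on differentiation cancel identically.) -/

import Mathlib

/-- Antisymmetric double sums vanish. -/
lemma antisym_double_sum {α : Type*} [DecidableEq α] (s : Finset α) (T : α → α → ℂ)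
    (hT : ∀ j ∈ s, ∀ k ∈ s, j ≠ k → T j k = - T k j) :
    ∑ j ∈ s, ∑ k ∈ s.erase j, T j k = 0 := by
  have hswap : ∑ j ∈ s, ∑ k ∈ s.erase j, T j k = ∑ k ∈ s, ∑ j ∈ s.erase k, T j k := by
    apply Finset.sum_comm'
    intro x y
    simp only [Finset.mem_erase, ne_eq]
    constructor
    · rintro ⟨hx, hyx, hy⟩
      exact ⟨⟨fun h => hyx h.symm, hx⟩, hy⟩
    · rintro ⟨⟨hxy, hx⟩, hy⟩
      exact ⟨hx, fun h => hxy h.symm, hy⟩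
  have hneg : ∑ k ∈ s, ∑ j ∈ s.erase k, T j k = - ∑ j ∈ s, ∑ k ∈ s.erase j, T j k := by
    rw [← Finset.sum_neg_distrib]
    apply Finset.sum_congr rfl
    intro k hk
    rw [← Finset.sum_neg_distrib]
    apply Finset.sum_congr rfl
    intro j hj
    have hjs := Finset.mem_of_mem_erase hj
    have hjk := (Finset.mem_erase.mp hj).1
    rw [hT j hjs k hk hjk]
  have h := hswap.trans hneg
  linear_combination h / 2

/-- The first-order charge dynamics `z_i' = ∑_{j≠i} Q_j/(z_i − z_j)` is embedded in the
second-order Hamiltonian flow `z_i'' = −∑_{j≠i} Q_j(Q_i + Q_j)/(z_i − z_j)³`. -/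
theorem charge_dynamics_hamiltonian_embedding
    (N : ℕ) (hN : 1 ≤ N) (Q : Fin N → ℂ) (z zd zdd : Fin N → ℝ → ℂ)
    (hderiv : ∀ i t, HasDerivAt (z i) (zd i t) t)
    (hderiv' : ∀ i t, HasDerivAt (zd i) (zdd i t) t)
    (hdist : ∀ t, ∀ i j : Fin N, i ≠ j → z i t ≠ z j t)
    (hflow : ∀ (i : Fin N) (t : ℝ),
      zd i t = ∑ j ∈ Finset.univ.erase i, Q j / (z i t - z j t)) :
    ∀ (i : Fin N) (t : ℝ),
      zdd i t = -∑ j ∈ Finset.univ.erase i,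
        Q j * (Q i + Q j) / (z i t - z j t) ^ 3 := by
  intro i t
  classical
  set s : Finset (Fin N) := Finset.univ.erase i with hs
  have hne : ∀ (u : ℝ) (a b : Fin N), a ≠ b → z a u - z b u ≠ 0 := fun u a b h =>
    sub_ne_zero.mpr (hdist u a b h)
  -- Step 1: compute zdd by differentiating the flow equation.
  have hD : HasDerivAt (zd i)
      (∑ j ∈ s, (-(Q j * (zd i t - zd j t)) / (z i t - z j t) ^ 2)) t := by
    have hsum : HasDerivAt (fun u => ∑ j ∈ s, Q j / (z i u - z j u))
        (∑ j ∈ s, (-(Q j * (zd i t - zd j t)) / (z i t - z j t) ^ 2)) t := by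
      apply HasDerivAt.fun_sum
      intro j hj
      have hij : i ≠ j := ((Finset.mem_erase.mp hj).1).symm
      have hd : HasDerivAt (fun y => Q j / (z i y - z j y))
          ((0 * (z i t - z j t) - Q j * (zd i t - zd j t)) / (z i t - z j t) ^ 2) t :=
        (hasDerivAt_const t (Q j)).fun_div ((hderiv i t).sub (hderiv j t)) (hne t i j hij)
      exact hd.congr_deriv (by ring)
    exact hsum.congr_of_eventuallyEq (Filter.Eventually.of_forall fun u => hflow i u)
  have hzdd : zdd i t = ∑ j ∈ s, (-(Q j * (zd i t - zd j t)) / (z i t - z j t) ^ 2) :=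
    (hderiv' i t).unique hD
  -- The antisymmetric interaction term.
  set T : Fin N → Fin N → ℂ := fun j k =>
    Q j * Q k / (z i t - z j t) ^ 2 * (1 / (z i t - z k t) - 1 / (z j t - z k t)) with hTdef
  -- Step 2: per-term expansion.
  have key : ∀ j ∈ s,
      -(Q j * (zd i t - zd j t)) / (z i t - z j t) ^ 2
        = -(Q j * (Q i + Q j) / (z i t - z j t) ^ 3) - ∑ k ∈ s.erase j, T j k := by
    intro j hj
    have hij : i ≠ j := ((Finset.mem_erase.mp hj).1).symm
    have ha : z i t - z j t ≠ 0 := hne t i j hij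
    have hiuj : i ∈ Finset.univ.erase j := Finset.mem_erase.mpr ⟨hij, Finset.mem_univ i⟩
    rw [hflow i t, hflow j t, ← Finset.sum_erase_add _ _ hj,
      ← Finset.sum_erase_add _ _ hiuj]
    have herase : (Finset.univ.erase j).erase i = s.erase j := by
      ext x
      simp only [hs, Finset.mem_erase, Finset.mem_univ, and_true]
      tauto
    rw [herase]
    have hT : ∑ k ∈ s.erase j, T j k
        = Q j / (z i t - z j t) ^ 2 * (∑ k ∈ s.erase j, Q k / (z i t - z k t))
          - Q j / (z i t - z j t) ^ 2 * (∑ k ∈ s.erase j, Q k / (z j t - z k t)) := by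
      rw [Finset.mul_sum, Finset.mul_sum, ← Finset.sum_sub_distrib]
      apply Finset.sum_congr rfl
      intro k hk
      simp only [hTdef]
      ring
    rw [hT]
    set A := ∑ k ∈ s.erase j, Q k / (z i t - z k t) with hA
    set B := ∑ k ∈ s.erase j, Q k / (z j t - z k t) with hB
    have hba : z j t - z i t = -(z i t - z j t) := by ring
    rw [hba, div_neg]
    field_simp [ha]
    ring
  rw [hzdd, Finset.sum_congr rfl key, Finset.sum_sub_distrib]
  have hzero : ∑ j ∈ s, ∑ k ∈ s.erase j, T j k = 0 := by
    apply antisym_double_sum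
    intro j hjs k hks hjk
    have hij : i ≠ j := ((Finset.mem_erase.mp hjs).1).symm
    have hik : i ≠ k := ((Finset.mem_erase.mp hks).1).symm
    have haj : z i t - z j t ≠ 0 := hne t i j hij
    have hak : z i t - z k t ≠ 0 := hne t i k hik
    have hajk : z j t - z k t ≠ 0 := hne t j k hjk
    have hakj : z k t - z j t ≠ 0 := hne t k j hjk.symm
    rw [hTdef]
    field_simp
    ring
  rw [hzero, sub_zero, ← Finset.sum_neg_distrib]
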